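/- Let C, d be positive integers, set N = C·d, and let Δ be a real number. Let x₁, …, x_N be real numbers among which each of the C values 0, 1/C, 2/C, …, (C−1)/C occurs exactly d times (for instance x_k = ⌊(k−1)/d⌋/C for k = 1, …, N). Then (N−1)·κ(Δ) + ∑_{1 ≤ i < j ≤ N} [κ(Δ + x_i − x_j) + κ(Δ − x_i + x_j)] = (N²/C³)·κ(CΔ) − κ(Δ). -/

import Mathlib

noncomputable def κ (x : ℝ) : ℝ :=
  Int.fract x * (1 - Int.fract x) * (1 - 2 * Int.fract x)


lemma kappa_add_int (x : ℝ) (k : ℤ) : κ (x + k) = κ x := by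
  simp [κ, Int.fract_add_intCast]

lemma kappa_of_Ico {x : ℝ} (h0 : 0 ≤ x) (h1 : x < 1) :
    κ x = x * (1 - x) * (1 - 2 * x) := by
  rw [κ, Int.fract_eq_self.2 ⟨h0, h1⟩]

lemma sum_id' (n : ℕ) : ∑ a ∈ Finset.range n, (a : ℝ) = n * (n - 1) / 2 := by
  induction n with
  | zero => simp
  | succ n ih => rw [Finset.sum_range_succ, ih]; push_cast; ring

lemma sum_sq' (n : ℕ) : ∑ a ∈ Finset.range n, (a : ℝ) ^ 2 = n * (n - 1) * (2 * n - 1) / 6 := by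
  induction n with
  | zero => simp
  | succ n ih => rw [Finset.sum_range_succ, ih]; push_cast; ring

lemma sum_cube' (n : ℕ) : ∑ a ∈ Finset.range n, (a : ℝ) ^ 3 = (n * (n - 1) / 2) ^ 2 := by
  induction n with
  | zero => simp
  | succ n ih => rw [Finset.sum_range_succ, ih]; push_cast; ring

lemma polyK (C : ℕ) (hC : 0 < C) (s : ℝ) :
    ∑ a ∈ Finset.range C, ((s + a) / C * (1 - (s + a) / C) * (1 - 2 * ((s + a) / C)))
      = s * (1 - s) * (1 - 2 * s) / (C : ℝ) ^ 2 := by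
  have hc : (C : ℝ) ≠ 0 := Nat.cast_ne_zero.2 hC.ne'
  have e : ∀ a ∈ Finset.range C,
      (s + a) / C * (1 - (s + a) / C) * (1 - 2 * ((s + a) / C))
        = (2 * s ^ 3 - 3 * C * s ^ 2 + (C:ℝ) ^ 2 * s) / (C:ℝ) ^ 3
          + ((6 * s ^ 2 - 6 * C * s + (C:ℝ) ^ 2) / (C:ℝ) ^ 3) * a
          + ((6 * s - 3 * C) / (C:ℝ) ^ 3) * (a:ℝ) ^ 2
          + (2 / (C:ℝ) ^ 3) * (a:ℝ) ^ 3 := by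
    intro a _
    field_simp
    ring
  rw [Finset.sum_congr rfl e]
  simp only [Finset.sum_add_distrib, Finset.sum_const, Finset.card_range, ← Finset.mul_sum,
    nsmul_eq_mul]
  rw [sum_id', sum_sq', sum_cube']
  field_simp
  ring


lemma shift_one (C : ℕ) (hC : 0 < C) (x : ℝ) :
    ∑ a ∈ Finset.range C, κ ((x + 1 + a) / C) = ∑ a ∈ Finset.range C, κ ((x + a) / C) := by
  have hc : (C : ℝ) ≠ 0 := Nat.cast_ne_zero.2 hC.ne'
  have h1 : ∑ a ∈ Finset.range C, κ ((x + 1 + a) / C)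
      = ∑ a ∈ Finset.range C, κ ((x + (a + 1 : ℕ)) / C) := by
    apply Finset.sum_congr rfl
    intro a _
    congr 2
    push_cast
    ring
  have h2 := Finset.sum_range_succ' (fun a => κ ((x + a) / C)) C
  have h3 := Finset.sum_range_succ (fun a => κ ((x + a) / C)) C
  have h4 : κ ((x + (C:ℕ)) / C) = κ ((x + (0:ℕ)) / C) := by
    have : (x + (C:ℕ)) / C = (x + (0:ℕ)) / C + (1 : ℤ) := by
      push_cast
      field_simp
      ring
    rw [this, kappa_add_int]
  rw [h1]
  linarith [h2, h3]

lemma shift_int (C : ℕ) (hC : 0 < C) (k : ℤ) (x : ℝ) :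
    ∑ a ∈ Finset.range C, κ ((x + k + a) / C) = ∑ a ∈ Finset.range C, κ ((x + a) / C) := by
  induction k using Int.induction_on with
  | zero => simp
  | succ i ih =>
      have h := shift_one C hC (x + ((i:ℤ):ℝ))
      have e : ∀ a ∈ Finset.range C, κ ((x + ((i:ℤ)+1 : ℤ) + a) / C) = κ ((x + (i:ℤ) + 1 + a) / C) := by
        intro a _; congr 2; push_cast; ring
      rw [Finset.sum_congr rfl e, h, ih]
  | pred i ih =>
      have h := shift_one C hC (x + (-(i:ℤ) - 1 : ℤ))
      have e : ∀ a ∈ Finset.range C, κ ((x + ((-(i:ℤ)-1) : ℤ) + 1 + a) / C) = κ ((x + (-(i:ℤ) : ℤ) + a) / C) := by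
        intro a _; congr 2; push_cast; ring
      rw [Finset.sum_congr rfl e] at h
      rw [← ih, ← h]

lemma kappa_dist (C : ℕ) (hC : 0 < C) (Δ : ℝ) :
    ∑ a ∈ Finset.range C, κ (Δ + a / C) = κ ((C : ℝ) * Δ) / (C : ℝ) ^ 2 := by
  have hc : (C : ℝ) ≠ 0 := Nat.cast_ne_zero.2 hC.ne'
  set u := Int.fract ((C : ℝ) * Δ) with hu
  have hum : (C : ℝ) * Δ = u + ⌊(C : ℝ) * Δ⌋ := by
    rw [hu]; rw [Int.fract]; ring
  have h1 : ∑ a ∈ Finset.range C, κ (Δ + a / C)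
      = ∑ a ∈ Finset.range C, κ ((u + ⌊(C : ℝ) * Δ⌋ + a) / C) := by
    apply Finset.sum_congr rfl
    intro a _
    congr 1
    rw [← hum]
    field_simp
  rw [h1, shift_int C hC]
  have hu0 : 0 ≤ u := Int.fract_nonneg _
  have hu1 : u < 1 := Int.fract_lt_one _
  have h2 : ∀ a ∈ Finset.range C, κ ((u + a) / C)
      = (u + a) / C * (1 - (u + a) / C) * (1 - 2 * ((u + a) / C)) := by
    intro a ha
    rw [Finset.mem_range] at ha
    have ha' : (a : ℝ) ≤ (C : ℝ) - 1 := by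
      have : (a : ℝ) + 1 ≤ C := by exact_mod_cast ha
      linarith
    have h0 : 0 ≤ (u + a) / C := by positivity
    have hlt : (u + a) / C < 1 := by
      rw [div_lt_one (by positivity)]
      linarith
    rw [κ, Int.fract_eq_self.2 ⟨h0, hlt⟩]
  rw [Finset.sum_congr rfl h2, polyK C hC u]
  rw [κ, ← hu]


lemma kappa_dist_neg (C : ℕ) (hC : 0 < C) (s : ℝ) :
    ∑ w ∈ Finset.range C, κ (s - w / C) = κ ((C : ℝ) * s) / (C : ℝ) ^ 2 := by
  have hc : (C : ℝ) ≠ 0 := Nat.cast_ne_zero.2 hC.ne'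
  have hrefl := Finset.sum_range_reflect (fun w => κ (s - w / C)) C
  rw [← hrefl]
  have e : ∀ j ∈ Finset.range C, κ (s - (C - 1 - j : ℕ) / C)
      = κ ((s - (C - 1 : ℝ) / C) + j / C) := by
    intro j hj
    rw [Finset.mem_range] at hj
    congr 1
    have h1 : ((C - 1 - j : ℕ) : ℝ) = (C : ℝ) - 1 - j := by
      have : j ≤ C - 1 := by omega
      rw [Nat.cast_sub this, Nat.cast_sub (by omega)]
      push_cast
      ring
    rw [h1]
    ring
  rw [Finset.sum_congr rfl e, kappa_dist C hC]
  congr 1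
  have hk := kappa_add_int ((C : ℝ) * s) (-(C : ℤ) + 1)
  rw [← hk]
  congr 1
  push_cast
  field_simp
  ring


theorem kappa_pack_identity (C d N : ℕ) (hC : 0 < C) (hd : 0 < d) (hN : N = C * d)
    (Δ : ℝ) (x : Fin N → ℝ)
    (hx : ∀ v : Fin C, (Finset.univ.filter (fun k : Fin N => x k = (v : ℝ) / C)).card = d) :
    ((N : ℝ) - 1) * κ Δ +
        ∑ p ∈ Finset.univ.filter (fun p : Fin N × Fin N => p.1 < p.2),
          (κ (Δ + x p.1 - x p.2) + κ (Δ - x p.1 + x p.2)) =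
      ((N : ℝ) ^ 2 / (C : ℝ) ^ 3) * κ (C * Δ) - κ Δ := by
  have hCne : (C : ℝ) ≠ 0 := Nat.cast_ne_zero.2 hC.ne'
  set B : Fin C → Finset (Fin N) :=
    fun v => Finset.univ.filter (fun k => x k = (v : ℝ) / C) with hB
  -- disjointness of fibers
  have hdisjB : ∀ v ∈ (Finset.univ : Finset (Fin C)), ∀ w ∈ (Finset.univ : Finset (Fin C)),
      v ≠ w → Disjoint (B v) (B w) := by
    intro v _ w _ hvw
    rw [Finset.disjoint_left]
    intro k hk hk'
    simp only [hB, Finset.mem_filter] at hk hk'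
    apply hvw
    have h1 : ((v : ℕ) : ℝ) / C = ((w : ℕ) : ℝ) / C := hk.2.symm.trans hk'.2
    field_simp at h1
    exact Fin.val_injective (by exact_mod_cast h1)
  have hUniv : Finset.univ.biUnion B = Finset.univ := by
    apply Finset.eq_of_subset_of_card_le (Finset.subset_univ _)
    rw [Finset.card_biUnion hdisjB]
    simp only [hB, hx]
    rw [Finset.card_univ, Fintype.card_fin, Finset.sum_const, Finset.card_univ,
      Fintype.card_fin, smul_eq_mul, hN]
  -- fiberwise summation
  have hfib : ∀ g : ℝ → ℝ, ∑ k : Fin N, g (x k)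
      = ∑ v ∈ Finset.range C, (d : ℝ) * g ((v : ℕ) / C) := by
    intro g
    have hpd : Set.PairwiseDisjoint (↑(Finset.univ : Finset (Fin C))) B := by
      intro v hv w hw hvw
      exact hdisjB v (Finset.mem_coe.1 hv) w (Finset.mem_coe.1 hw) hvw
    have h1 : ∑ k : Fin N, g (x k) = ∑ v : Fin C, ∑ k ∈ B v, g (x k) := by
      rw [← Finset.sum_biUnion hpd, hUniv]
    have h2 : ∀ v : Fin C, ∑ k ∈ B v, g (x k) = (d : ℝ) * g ((v : ℕ) / C) := by
      intro v
      have : ∀ k ∈ B v, g (x k) = g ((v : ℕ) / C) := by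
        intro k hk
        simp only [hB, Finset.mem_filter] at hk
        rw [hk.2]
      rw [Finset.sum_congr rfl this, Finset.sum_const, hx v, nsmul_eq_mul]
    rw [h1, Finset.sum_congr rfl (fun v _ => h2 v)]
    exact Fin.sum_univ_eq_sum_range (fun m => (d : ℝ) * g ((m : ℝ) / C)) C
  -- notation for the pair function
  set F : Fin N → Fin N → ℝ := fun i j => κ (Δ + x i - x j) with hF
  -- rewrite second kappa term
  have hswap : ∀ p : Fin N × Fin N, κ (Δ - x p.1 + x p.2) = F p.2 p.1 := by
    intro p
    rw [hF]
    congr 1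
    ring
  -- split full sum
  have h1 := Finset.sum_filter_add_sum_filter_not (Finset.univ : Finset (Fin N × Fin N))
    (fun p => p.1 < p.2) (fun p => F p.1 p.2)
  have h2 : (Finset.univ : Finset (Fin N × Fin N)).filter (fun p => ¬ p.1 < p.2)
      = (Finset.univ.filter (fun p : Fin N × Fin N => p.2 < p.1)) ∪
        (Finset.univ.filter (fun p : Fin N × Fin N => p.1 = p.2)) := by
    ext p
    simp only [Finset.mem_filter, Finset.mem_union, Finset.mem_univ, true_and, not_lt]
    constructor
    · intro h
      rcases lt_or_eq_of_le h with h' | h'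
      · exact Or.inl h'
      · exact Or.inr h'.symm
    · rintro (h | h)
      · exact h.le
      · exact le_of_eq h.symm
  have hdisj2 : Disjoint (Finset.univ.filter (fun p : Fin N × Fin N => p.2 < p.1))
      (Finset.univ.filter (fun p : Fin N × Fin N => p.1 = p.2)) := by
    rw [Finset.disjoint_left]
    intro p hp hp'
    simp only [Finset.mem_filter, Finset.mem_univ, true_and] at hp hp'
    exact absurd (hp' ▸ hp) (lt_irrefl _)
  have h3 : ∑ p ∈ Finset.univ.filter (fun p : Fin N × Fin N => p.2 < p.1), F p.1 p.2
      = ∑ p ∈ Finset.univ.filter (fun p : Fin N × Fin N => p.1 < p.2), F p.2 p.1 := by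
    apply Finset.sum_nbij' (fun p => Prod.swap p) (fun p => Prod.swap p)
    · intro p hp
      simp only [Finset.mem_filter, Finset.mem_univ, true_and] at hp ⊢
      exact hp
    · intro p hp
      simp only [Finset.mem_filter, Finset.mem_univ, true_and] at hp ⊢
      exact hp
    · intro p _; simp
    · intro p _; simp
    · intro p _; simp
  have h4 : ∑ p ∈ Finset.univ.filter (fun p : Fin N × Fin N => p.1 = p.2), F p.1 p.2
      = ∑ i : Fin N, F i i := by
    symm
    apply Finset.sum_nbij' (fun i => ((i, i) : Fin N × Fin N)) (fun p => p.1)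
    · intro i _
      simp
    · intro p hp
      simp
    · intro i _; simp
    · intro p hp
      simp only [Finset.mem_filter, Finset.mem_univ, true_and] at hp
      exact Prod.ext rfl hp
    · intro i _; simp
  -- total sum computation
  have hTotal : ∑ p : Fin N × Fin N, F p.1 p.2
      = (C : ℝ) * ((d : ℝ) * ((d : ℝ) * (κ ((C : ℝ) * Δ) / (C : ℝ) ^ 2))) := by
    rw [Fintype.sum_prod_type]
    have hstep1 : ∑ i : Fin N, ∑ j : Fin N, F i j
        = ∑ v ∈ Finset.range C, (d : ℝ) * (∑ j : Fin N, κ (Δ + (v : ℝ) / C - x j)) :=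
      hfib (fun y => ∑ j : Fin N, κ (Δ + y - x j))
    rw [hstep1]
    have hstep2 : ∀ v ∈ Finset.range C, (d : ℝ) * (∑ j : Fin N, κ (Δ + (v : ℝ) / C - x j))
        = (d : ℝ) * ((d : ℝ) * (κ ((C : ℝ) * Δ) / (C : ℝ) ^ 2)) := by
      intro v hv
      congr 1
      have hin : ∑ j : Fin N, κ (Δ + (v : ℝ) / C - x j)
          = ∑ w ∈ Finset.range C, (d : ℝ) * κ (Δ + (v : ℝ) / C - (w : ℝ) / C) :=
        hfib (fun y => κ (Δ + (v : ℝ) / C - y))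
      rw [hin, ← Finset.mul_sum]
      congr 1
      have := kappa_dist_neg C hC (Δ + (v : ℝ) / C)
      have harg : ∀ w ∈ Finset.range C,
          κ (Δ + (v : ℝ) / C - (w : ℝ) / C) = κ ((Δ + (v : ℝ) / C) - (w : ℝ) / C) := by
        intro w _; ring_nf
      rw [this]
      congr 1
      have hk := kappa_add_int ((C : ℝ) * Δ) ((v : ℕ) : ℤ)
      rw [← hk]
      congr 1
      push_cast
      field_simp
    rw [Finset.sum_congr rfl hstep2, Finset.sum_const, Finset.card_range, nsmul_eq_mul]
  have hDiag : ∑ i : Fin N, F i i = (N : ℝ) * κ Δ := by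
    have e : ∀ i : Fin N, F i i = κ Δ := by
      intro i
      rw [hF]
      congr 1
      ring
    rw [Finset.sum_congr rfl (fun i _ => e i), Finset.sum_const, Finset.card_univ,
      Fintype.card_fin, nsmul_eq_mul]
  have hkey : ∑ p ∈ Finset.univ.filter (fun p : Fin N × Fin N => p.1 < p.2),
      (κ (Δ + x p.1 - x p.2) + κ (Δ - x p.1 + x p.2))
      = (∑ p : Fin N × Fin N, F p.1 p.2) - ∑ i : Fin N, F i i := by
    have e : ∀ p ∈ Finset.univ.filter (fun p : Fin N × Fin N => p.1 < p.2),
        κ (Δ + x p.1 - x p.2) + κ (Δ - x p.1 + x p.2) = F p.1 p.2 + F p.2 p.1 := by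
      intro p _
      rw [hswap p]
    rw [Finset.sum_congr rfl e, Finset.sum_add_distrib, ← h3]
    have h5 : ∑ p ∈ (Finset.univ : Finset (Fin N × Fin N)).filter (fun p => ¬ p.1 < p.2),
        F p.1 p.2
        = (∑ p ∈ Finset.univ.filter (fun p : Fin N × Fin N => p.2 < p.1), F p.1 p.2)
          + ∑ i : Fin N, F i i := by
      rw [h2, Finset.sum_union hdisj2, h4]
    linarith [h1, h5]
  rw [hkey, hTotal, hDiag]
  subst hN
  push_cast
  field_simp
  ring
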